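/- arXiv:1309.3690 — 3 statements merged into one kernel-verified Lean document; each statement's English description precedes it below -/
import Mathlib

section
/- For independent uniform samples from [n] with n ≥ 4, the number X of samples until the first duplicate satisfies E[X²] ≤ 4n. -/
/-- The number of samples drawn until the first duplicate occurs. -/
noncomputable def firstDup (n : ℕ) (u : Fin (n + 1) → Fin n) : ℕ :=
  sInf {m : ℕ | ∃ i j : Fin (n + 1), (i : ℕ) < j ∧ (j : ℕ) < m ∧ u i = u j}

lemma firstDup_set_mem (n : ℕ) (u : Fin (n + 1) → Fin n) :
    (n + 1) ∈ {m : ℕ | ∃ i j : Fin (n + 1), (i : ℕ) < j ∧ (j : ℕ) < m ∧ u i = u j} := by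
  obtain ⟨i, j, hne, he⟩ := Fintype.exists_ne_map_eq_of_card_lt u (by simp)
  rcases hne.lt_or_gt with h | h
  · exact ⟨i, j, h, j.isLt, he⟩
  · exact ⟨j, i, h, i.isLt, he.symm⟩

lemma firstDup_le (n : ℕ) (u : Fin (n + 1) → Fin n) : firstDup n u ≤ n + 1 :=
  Nat.sInf_le (firstDup_set_mem n u)

lemma lt_firstDup_iff (n : ℕ) (u : Fin (n + 1) → Fin n) (j : ℕ) :
    j < firstDup n u ↔
      ∀ i i' : Fin (n + 1), (i : ℕ) < j → (i' : ℕ) < j → u i = u i' → i = i' := by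
  constructor
  · intro h i i' hi hi' he
    by_contra hne
    have hne' : i ≠ i' := hne
    apply not_le.mpr h
    apply Nat.sInf_le
    rcases hne'.lt_or_gt with hlt | hlt
    · exact ⟨i, i', hlt, hi', he⟩
    · exact ⟨i', i, hlt, hi, he.symm⟩
  · intro h
    by_contra hle
    push_neg at hle
    have hmem := Nat.sInf_mem ⟨n + 1, firstDup_set_mem n u⟩
    obtain ⟨i, i', hlt, hlt', he⟩ := hmem
    have h2 : (i' : ℕ) < j := lt_of_lt_of_le hlt' hle
    have h3 := h i i' (hlt.trans h2) h2 he
    rw [h3] at hlt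
    exact lt_irrefl _ hlt

lemma count_eq (n j : ℕ) (hj : j ≤ n + 1) :
    (Finset.univ.filter (fun u : Fin (n + 1) → Fin n => j < firstDup n u)).card
      = n.descFactorial j * n ^ (n + 1 - j) := by
  classical
  have hfilter : (Finset.univ.filter (fun u : Fin (n + 1) → Fin n => j < firstDup n u))
      = Finset.univ.filter (fun u : Fin (n + 1) → Fin n =>
          ∀ i i' : Fin (n + 1), (i : ℕ) < j → (i' : ℕ) < j → u i = u i' → i = i') := by
    apply Finset.filter_congr
    intro u _
    exact lt_firstDup_iff n u j
  rw [hfilter, ← Fintype.card_subtype]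
  have hsum : j + (n + 1 - j) = n + 1 := by omega
  let d : Fin j ⊕ Fin (n + 1 - j) ≃ Fin (n + 1) := finSumFinEquiv.trans (finCongr hsum)
  have hd : ∀ i : Fin j, ((d (Sum.inl i) : Fin (n + 1)) : ℕ) = (i : ℕ) := by
    intro i; simp [d]
  have e1 : {u : Fin (n + 1) → Fin n //
        ∀ i i' : Fin (n + 1), (i : ℕ) < j → (i' : ℕ) < j → u i = u i' → i = i'}
      ≃ {g : Fin j ⊕ Fin (n + 1 - j) → Fin n //
          Function.Injective (fun i : Fin j => g (Sum.inl i))} := by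
    refine Equiv.subtypeEquiv (Equiv.arrowCongr d (Equiv.refl (Fin n))).symm ?_
    intro u
    constructor
    · intro hp a b hab
      have hab' : u (d (Sum.inl a)) = u (d (Sum.inl b)) := hab
      have := hp (d (Sum.inl a)) (d (Sum.inl b)) (by rw [hd]; exact a.isLt)
        (by rw [hd]; exact b.isLt) hab'
      exact Sum.inl_injective (d.injective this)
    · intro hI i i' hi hi' he
      have h1 : i = d (Sum.inl ⟨(i : ℕ), hi⟩) := Fin.ext (by rw [hd])
      have h2 : i' = d (Sum.inl ⟨(i' : ℕ), hi'⟩) := Fin.ext (by rw [hd])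
      rw [h1, h2] at he ⊢
      have : (⟨(i : ℕ), hi⟩ : Fin j) = ⟨(i' : ℕ), hi'⟩ := hI he
      rw [this]
  let e2 : {g : Fin j ⊕ Fin (n + 1 - j) → Fin n //
        Function.Injective (fun i : Fin j => g (Sum.inl i))}
      ≃ {p : (Fin j → Fin n) × (Fin (n + 1 - j) → Fin n) // Function.Injective p.1} :=
    { toFun := fun x => ⟨(fun i => x.1 (Sum.inl i), fun i => x.1 (Sum.inr i)), x.2⟩
      invFun := fun y => ⟨Sum.elim y.1.1 y.1.2, y.2⟩
      left_inv := fun x => Subtype.ext (funext fun s => by cases s <;> rfl)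
      right_inv := fun y => rfl }
  let e3 : {p : (Fin j → Fin n) × (Fin (n + 1 - j) → Fin n) // Function.Injective p.1}
      ≃ {v : Fin j → Fin n // Function.Injective v} × (Fin (n + 1 - j) → Fin n) :=
    { toFun := fun x => (⟨x.1.1, x.2⟩, x.1.2)
      invFun := fun y => ⟨(y.1.1, y.2), y.1.2⟩
      left_inv := fun x => rfl
      right_inv := fun y => rfl }
  rw [Fintype.card_congr (e1.trans (e2.trans e3)), Fintype.card_prod,
    Fintype.card_congr (Equiv.subtypeInjectiveEquivEmbedding (Fin j) (Fin n)),
    Fintype.card_embedding_eq]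
  simp [Fintype.card_fun]

lemma sum_odd (m : ℕ) : ∑ j ∈ Finset.range m, (2 * j + 1) = m ^ 2 := by
  induction m with
  | zero => simp
  | succ k ih => rw [Finset.sum_range_succ, ih]; ring

/-- For i.u.d. samples from `[n]` with `n ≥ 4`, the number `X` of samples until the
first duplicate satisfies `E[X²] ≤ 4n`. -/
theorem stmt2 (n : ℕ) (hn : 4 ≤ n) :
    (∑ u : Fin (n + 1) → Fin n, ((firstDup n u : ℝ) ^ 2)) /
        (Fintype.card (Fin (n + 1) → Fin n) : ℝ) ≤ 4 * n := by
  classical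
  have hn0 : 0 < n := by omega
  set B : ℕ → ℕ := fun j => n.descFactorial j * n ^ (n + 1 - j) with hB
  -- combinatorial identity for the sum of squares
  have hS : (∑ u : Fin (n + 1) → Fin n, (firstDup n u) ^ 2)
      = ∑ j ∈ Finset.range (n + 1), (2 * j + 1) * B j := by
    have h1 : ∀ u : Fin (n + 1) → Fin n, (firstDup n u) ^ 2
        = ∑ j ∈ Finset.range (n + 1), if j < firstDup n u then 2 * j + 1 else 0 := by
      intro u
      rw [← Finset.sum_filter]
      have hfe : (Finset.range (n + 1)).filter (fun j => j < firstDup n u)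
          = Finset.range (firstDup n u) := by
        ext j
        simp only [Finset.mem_filter, Finset.mem_range]
        have := firstDup_le n u
        omega
      rw [hfe, sum_odd]
    simp_rw [h1]
    rw [Finset.sum_comm]
    refine Finset.sum_congr rfl fun j hj => ?_
    rw [← Finset.sum_filter, Finset.sum_const, smul_eq_mul, mul_comm,
      count_eq n j (by simp only [Finset.mem_range] at hj; omega)]
  -- real estimate
  have hBle : ∀ j ∈ Finset.range (n + 1), (B j : ℝ) ≤ (n : ℝ) ^ (n + 1) := by
    intro j hj
    simp only [Finset.mem_range] at hj
    have : B j ≤ n ^ (n + 1) := by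
      calc B j ≤ n ^ j * n ^ (n + 1 - j) :=
            Nat.mul_le_mul_right _ (Nat.descFactorial_le_pow _ _)
        _ = n ^ (n + 1) := by rw [← pow_add]; congr 1; omega
    exact_mod_cast this
  have hkey : ∀ j ∈ Finset.range (n + 1), ((2 * j + 1 : ℕ) : ℝ) * B j
      = 2 * ((n : ℝ) * B j - (n : ℝ) * B (j + 1)) + B j := by
    intro j hj
    simp only [Finset.mem_range] at hj
    have hjn : j ≤ n := by omega
    have hpow : n ^ (n + 1 - j) = n ^ (n - j) * n := by
      rw [← pow_succ]; congr 1; omega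
    have hnat : n * B (j + 1) = (n - j) * B j := by
      simp only [hB, Nat.descFactorial_succ]
      have h1 : n + 1 - (j + 1) = n - j := by omega
      rw [h1, hpow]; ring
    have hcast : ((n : ℝ)) * B (j + 1) = ((n : ℝ) - j) * B j := by
      have h := congrArg (fun k : ℕ => (k : ℝ)) hnat
      push_cast [Nat.cast_sub hjn] at h
      linarith [h]
    push_cast
    nlinarith [hcast]
  have hsum1 : ∑ j ∈ Finset.range (n + 1), ((n : ℝ) * B j - (n : ℝ) * B (j + 1))
      = (n : ℝ) * B 0 - (n : ℝ) * B (n + 1) :=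
    Finset.sum_range_sub' (fun j => (n : ℝ) * B j) (n + 1)
  have hB0 : (B 0 : ℝ) = (n : ℝ) ^ (n + 1) := by simp [hB]
  have hmain : (∑ j ∈ Finset.range (n + 1), ((2 * j + 1 : ℕ) : ℝ) * B j)
      ≤ 4 * n * (n : ℝ) ^ (n + 1) := by
    rw [Finset.sum_congr rfl hkey, Finset.sum_add_distrib, ← Finset.mul_sum, hsum1]
    have h2 : ∑ j ∈ Finset.range (n + 1), (B j : ℝ) ≤ ((n : ℝ) + 1) * (n : ℝ) ^ (n + 1) := by
      calc ∑ j ∈ Finset.range (n + 1), (B j : ℝ)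
          ≤ ∑ _j ∈ Finset.range (n + 1), (n : ℝ) ^ (n + 1) := Finset.sum_le_sum hBle
        _ = ((n : ℝ) + 1) * (n : ℝ) ^ (n + 1) := by
            rw [Finset.sum_const, Finset.card_range]; push_cast; ring
    have h3 : (0 : ℝ) ≤ (n : ℝ) * B (n + 1) := by positivity
    have h4 : (0 : ℝ) ≤ (n : ℝ) ^ (n + 1) := by positivity
    have h5 : (n : ℝ) ≥ 4 := by exact_mod_cast hn
    nlinarith [hB0]
  -- put it together
  have hcard : (Fintype.card (Fin (n + 1) → Fin n) : ℝ) = (n : ℝ) ^ (n + 1) := by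
    simp [Fintype.card_fun]
  have hcardpos : (0 : ℝ) < (Fintype.card (Fin (n + 1) → Fin n) : ℝ) := by
    rw [hcard]; positivity
  rw [div_le_iff₀ hcardpos, hcard]
  have hLHS : (∑ u : Fin (n + 1) → Fin n, ((firstDup n u : ℝ) ^ 2))
      = ((∑ u : Fin (n + 1) → Fin n, (firstDup n u) ^ 2 : ℕ) : ℝ) := by
    push_cast; rfl
  rw [hLHS, hS]
  push_cast
  have := hmain
  push_cast at this
  convert this using 2
end

section
/- Let x ∈ [n+m-1]-indexed input with 1 ≤ m < n and assume the middle segment x_m,...,x_n is all-distinct. Define i_L = max{j ∈ [m-1] : (x_j,...,x_n) has a duplicate} (0 if none) and i_R = min{j ∈ [m-1] : (x_m,...,x_{n+j}) has a duplicate} (m if none). Then for each window index w ∈ [m], the window (x_w,...,x_{w+n-1}) is all-distinct if and only if w > i_L, w ≤ i_R, and the w-th window of length m-1 of the concatenation (x₁,...,x_{m-1}, x_{n+1},...,x_{n+m-1}) is all-distinct. -/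
/-- (1-indexed input `x_1,…,x_{n+m-1}`, `1 ≤ m < n`.) Assume the middle segment
`x_m,…,x_n` is all-distinct. With `i_L = max{j ∈ [m-1] : (x_j,…,x_n) has a duplicate}`
(`0` if none; `sSup ∅ = 0` in `ℕ`), and `i_R = min{j ∈ [m-1] : (x_m,…,x_{n+j}) has a
duplicate}` (`m` if none), and `y` the concatenation `(x_1,…,x_{m-1},x_{n+1},…,x_{n+m-1})`
(1-indexed, length `2m-2`): for each window index `w ∈ [m]`, the window
`(x_w,…,x_{w+n-1})` is all-distinct iff `w > i_L`, `w ≤ i_R`, and the `w`-th length-(m-1)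
window `(y_w,…,y_{w+m-2})` of the concatenation is all-distinct. -/
theorem stmt11 (n m : ℕ) (hm : 1 ≤ m) (hmn : m < n) (α : Type*) (x : ℕ → α)
    (hmid : Set.InjOn x (Set.Icc m n))
    (iL iR : ℕ)
    (hiL : iL = sSup {j | j ∈ Set.Icc 1 (m - 1) ∧ ¬ Set.InjOn x (Set.Icc j n)})
    (hiR1 : (∃ j ∈ Set.Icc 1 (m - 1), ¬ Set.InjOn x (Set.Icc m (n + j))) →
      iR = sInf {j | j ∈ Set.Icc 1 (m - 1) ∧ ¬ Set.InjOn x (Set.Icc m (n + j))})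
    (hiR2 : (∀ j ∈ Set.Icc 1 (m - 1), Set.InjOn x (Set.Icc m (n + j))) → iR = m)
    (y : ℕ → α)
    (hy : ∀ t, 1 ≤ t → t ≤ 2 * m - 2 →
      y t = if t ≤ m - 1 then x t else x (n + t - (m - 1))) :
    ∀ w, 1 ≤ w → w ≤ m →
      (Set.InjOn x (Set.Icc w (w + n - 1)) ↔
        (iL < w ∧ w ≤ iR ∧ Set.InjOn y (Set.Icc w (w + m - 2)))) := by
  intro w hw1 hwm
  have hn1 : 1 ≤ n := hm.trans hmn.le
  have hSbdd : BddAbove {j | j ∈ Set.Icc 1 (m - 1) ∧ ¬ Set.InjOn x (Set.Icc j n)} :=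
    ⟨m - 1, fun j hj => hj.1.2⟩
  -- Claim A
  have hA : iL < w ↔ Set.InjOn x (Set.Icc w n) := by
    constructor
    · intro hlt
      rcases eq_or_lt_of_le hwm with h | h
      · subst h; exact hmid
      · by_contra hni
        have hwS : w ∈ {j | j ∈ Set.Icc 1 (m - 1) ∧ ¬ Set.InjOn x (Set.Icc j n)} :=
          ⟨⟨hw1, by omega⟩, hni⟩
        have h2 : w ≤ iL := hiL ▸ le_csSup hSbdd hwS
        omega
    · intro hinj
      by_contra hle
      push_neg at hle
      have hSne : {j | j ∈ Set.Icc 1 (m - 1) ∧ ¬ Set.InjOn x (Set.Icc j n)}.Nonempty := by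
        by_contra hemp
        rw [Set.not_nonempty_iff_eq_empty] at hemp
        rw [hemp] at hiL; rw [csSup_empty, Nat.bot_eq_zero] at hiL
        omega
      have hmem : iL ∈ {j | j ∈ Set.Icc 1 (m - 1) ∧ ¬ Set.InjOn x (Set.Icc j n)} :=
        hiL ▸ Nat.sSup_mem hSne hSbdd
      exact hmem.2 (hinj.mono (Set.Icc_subset_Icc_left hle))
  -- Claim B
  have hB : w ≤ iR ↔ Set.InjOn x (Set.Icc m (w + n - 1)) := by
    by_cases hTne : ∃ j ∈ Set.Icc 1 (m - 1), ¬ Set.InjOn x (Set.Icc m (n + j))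
    · have hiR := hiR1 hTne
      have hTne' : {j | j ∈ Set.Icc 1 (m - 1) ∧ ¬ Set.InjOn x (Set.Icc m (n + j))}.Nonempty := by
        obtain ⟨j, hj1, hj2⟩ := hTne; exact ⟨j, hj1, hj2⟩
      have hmem : iR ∈ {j | j ∈ Set.Icc 1 (m - 1) ∧ ¬ Set.InjOn x (Set.Icc m (n + j))} :=
        hiR ▸ Nat.sInf_mem hTne'
      have hmem1 : 1 ≤ iR ∧ iR ≤ m - 1 := hmem.1
      constructor
      · intro hwle
        rcases eq_or_lt_of_le hw1 with h | h
        · have hb : w + n - 1 = n := by omega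
          rw [hb]; exact hmid
        · by_contra hni
          have hwT : w - 1 ∈ {j | j ∈ Set.Icc 1 (m - 1) ∧ ¬ Set.InjOn x (Set.Icc m (n + j))} := by
            refine ⟨⟨by omega, by omega⟩, ?_⟩
            have hb : n + (w - 1) = w + n - 1 := by omega
            rw [hb]; exact hni
          have h3 : iR ≤ w - 1 := hiR ▸ Nat.sInf_le hwT
          omega
      · intro hinj
        by_contra hlt
        push_neg at hlt
        refine hmem.2 (hinj.mono (Set.Icc_subset_Icc_right ?_))
        omega
    · push_neg at hTne
      have hiR := hiR2 hTne
      constructor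
      · intro _
        rcases eq_or_lt_of_le hw1 with h | h
        · have hb : w + n - 1 = n := by omega
          rw [hb]; exact hmid
        · have h2 := hTne (w - 1) ⟨by omega, by omega⟩
          have hb : n + (w - 1) = w + n - 1 := by omega
          rwa [hb] at h2
      · intro _; omega
  -- Claim C : transfer y to x
  have hC : Set.InjOn y (Set.Icc w (w + m - 2)) ↔
      Set.InjOn x (Set.Icc w (m - 1) ∪ Set.Icc (n + 1) (w + n - 1)) := by
    set φ : ℕ → ℕ := fun t => if t ≤ m - 1 then t else n + t - (m - 1) with hφ
    have hyx : ∀ t ∈ Set.Icc w (w + m - 2), y t = x (φ t) := by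
      intro t ht
      simp only [Set.mem_Icc] at ht
      rw [hy t (by omega) (by omega)]
      simp only [hφ]
      split_ifs <;> rfl
    have hφmem : ∀ t ∈ Set.Icc w (w + m - 2),
        φ t ∈ Set.Icc w (m - 1) ∪ Set.Icc (n + 1) (w + n - 1) := by
      intro t ht
      simp only [Set.mem_Icc] at ht
      simp only [hφ, Set.mem_union, Set.mem_Icc]
      split_ifs with h
      · left; omega
      · right; omega
    have hφinj : ∀ a ∈ Set.Icc w (w + m - 2), ∀ b ∈ Set.Icc w (w + m - 2),
        φ a = φ b → a = b := by
      intro a ha b hb h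
      simp only [Set.mem_Icc] at ha hb
      simp only [hφ] at h
      split_ifs at h <;> omega
    have hφsurj : ∀ u ∈ Set.Icc w (m - 1) ∪ Set.Icc (n + 1) (w + n - 1),
        ∃ t ∈ Set.Icc w (w + m - 2), φ t = u := by
      intro u hu
      rcases hu with hu | hu <;> simp only [Set.mem_Icc] at hu
      · refine ⟨u, by simp only [Set.mem_Icc]; omega, ?_⟩
        simp only [hφ]
        rw [if_pos (by omega)]
      · refine ⟨u + m - 1 - n, by simp only [Set.mem_Icc]; omega, ?_⟩
        simp only [hφ]
        rw [if_neg (by omega)]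
        omega
    constructor
    · intro h u hu v hv hxy
      obtain ⟨a, ha, rfl⟩ := hφsurj u hu
      obtain ⟨b, hb, rfl⟩ := hφsurj v hv
      have hab : y a = y b := by rw [hyx a ha, hyx b hb]; exact hxy
      rw [h ha hb hab]
    · intro h a ha b hb hyab
      rw [hyx a ha, hyx b hb] at hyab
      exact hφinj a ha b hb (h (hφmem a ha) (hφmem b hb) hyab)
  -- Main decomposition
  have hmain : Set.InjOn x (Set.Icc w (w + n - 1)) ↔
      (Set.InjOn x (Set.Icc w n) ∧ Set.InjOn x (Set.Icc m (w + n - 1)) ∧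
       Set.InjOn x (Set.Icc w (m - 1) ∪ Set.Icc (n + 1) (w + n - 1))) := by
    constructor
    · intro h
      refine ⟨h.mono (Set.Icc_subset_Icc_right (by omega)),
        h.mono (Set.Icc_subset_Icc_left (by omega)), h.mono ?_⟩
      intro t ht
      rcases ht with ht | ht <;> simp only [Set.mem_Icc] at ht ⊢ <;> omega
    · rintro ⟨hA', hB', hC'⟩
      intro a ha b hb hxy
      simp only [Set.mem_Icc] at ha hb
      by_cases han : a ≤ n <;> by_cases hbn : b ≤ n
      · exact hA' ⟨ha.1, han⟩ ⟨hb.1, hbn⟩ hxy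
      · by_cases ham : m ≤ a
        · exact hB' ⟨ham, by omega⟩ ⟨by omega, hb.2⟩ hxy
        · exact hC' (Or.inl ⟨ha.1, by omega⟩) (Or.inr ⟨by omega, hb.2⟩) hxy
      · by_cases hbm : m ≤ b
        · exact hB' ⟨by omega, ha.2⟩ ⟨hbm, by omega⟩ hxy
        · exact hC' (Or.inr ⟨by omega, ha.2⟩) (Or.inl ⟨hb.1, by omega⟩) hxy
      · exact hB' ⟨by omega, ha.2⟩ ⟨by omega, hb.2⟩ hxy
  rw [hmain]
  exact and_congr hA.symm (and_congr hB.symm hC.symm)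
end

section
/- In the multi-source collision-finding algorithm, in which each traversal of a stored cycle splits it into two cycles whose lengths differ by at most 1 (each roughly half), any single edge of the explored graph is traversed at most O(min{k, log n}) times over k iterations. -/
/-- Each traversal of a stored cycle splits it into two cycles of roughly half the
length. If `L t` is the length of the cycle containing a fixed edge at the time of its
`t`-th traversal, then `L 0 ≤ n`, each traversal at least halves the length (rounding
up: `2·L(t+1) ≤ L t + 1`), traversed cycles have length at least 2, and there are at
most `k` iterations; hence the edge is traversed at most `min{k, log₂ n + 1}` times. -/
theorem stmt19 (n k T : ℕ) (hn : 1 ≤ n) (L : ℕ → ℕ)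
    (hL0 : L 0 ≤ n) (hhalf : ∀ t, 2 * L (t + 1) ≤ L t + 1)
    (hpos : ∀ t < T, 2 ≤ L t) (hTk : T ≤ k) :
    T ≤ min k (Nat.log 2 n + 1) := by
  refine le_min hTk ?_
  rcases Nat.eq_zero_or_pos T with h | h
  · omega
  have key : ∀ t, 2 ^ t * (L t - 1) ≤ L 0 - 1 := by
    intro t
    induction t with
    | zero => simp
    | succ t ih =>
      calc 2 ^ (t + 1) * (L (t + 1) - 1) = 2 ^ t * (2 * (L (t + 1) - 1)) := by ring
        _ ≤ 2 ^ t * (L t - 1) := by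
            have := hhalf t; exact Nat.mul_le_mul_left _ (by omega)
        _ ≤ L 0 - 1 := ih
  have h2 : 2 ≤ L (T - 1) := hpos _ (by omega)
  have hk := key (T - 1)
  have hpow : 2 ^ (T - 1) ≤ n := by
    have : 2 ^ (T - 1) * 1 ≤ 2 ^ (T - 1) * (L (T - 1) - 1) :=
      Nat.mul_le_mul_left _ (by omega)
    omega
  have := (Nat.le_log_iff_pow_le (by norm_num) (by omega)).mpr hpow
  omega
end
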